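/- Let n, m ≥ 1, 1 ≤ i ≤ m, and let φ ∈ S_m. Let φ'' ∈ S_{m+n−1} be the block permutation obtained from φ by replacing the i-th input with a block of size n (i.e., φ'' permutes the m blocks of sizes 1,…,1,n,1,…,1 according to φ, acting identically within the block). Then sgn(φ'') = (−1)^{(n−1)(φ(i)−i)} · sgn(φ). -/

import Mathlib

open Equiv Equiv.Perm

/-- The cycle sending the last element `N-1` to `k`, and shifting `[k, N-1)` up by one. -/
def rho {N : ℕ} (k : Fin N) : Equiv.Perm (Fin N) where
  toFun x := if h1 : (x : ℕ) = N - 1 then k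
    else if h : (k : ℕ) ≤ (x : ℕ) then ⟨(x : ℕ) + 1, by
      have := x.isLt; omega⟩ else x
  invFun x := if h1 : (x : ℕ) = (k : ℕ) then ⟨N - 1, by have := k.isLt; omega⟩
    else if h : (k : ℕ) < (x : ℕ) then ⟨(x : ℕ) - 1, by have := x.isLt; omega⟩ else x
  left_inv := by
    intro x
    have hx := x.isLt; have hk := k.isLt
    apply Fin.ext
    by_cases h1 : (x : ℕ) = N - 1 <;> by_cases h2 : (k : ℕ) ≤ (x : ℕ) <;>
      simp [h1, h2] <;> split_ifs <;> simp_all <;> omega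
  right_inv := by
    intro x
    have hx := x.isLt; have hk := k.isLt
    apply Fin.ext
    by_cases h1 : (x : ℕ) = (k : ℕ) <;> by_cases h2 : (k : ℕ) < (x : ℕ) <;>
      simp [h1, h2] <;> split_ifs <;> simp_all <;> omega

lemma rho_apply {N : ℕ} (k x : Fin N) :
    ((rho k x : Fin N) : ℕ) =
      if (x : ℕ) = N - 1 then (k : ℕ) else if (k : ℕ) ≤ (x : ℕ) then (x : ℕ) + 1 else (x : ℕ) := by
  show ((if h1 : (x : ℕ) = N - 1 then k else if h : (k : ℕ) ≤ (x : ℕ) then (⟨(x:ℕ)+1, _⟩ : Fin N) else x : Fin N) : ℕ) = _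
  split_ifs <;> rfl

lemma rho_symm_apply {N : ℕ} (k x : Fin N) :
    (((rho k)⁻¹ x : Fin N) : ℕ) =
      if (x : ℕ) = (k : ℕ) then N - 1 else if (k : ℕ) < (x : ℕ) then (x : ℕ) - 1 else (x : ℕ) := by
  show (((rho k).symm x : Fin N) : ℕ) = _
  show ((if h1 : (x : ℕ) = (k : ℕ) then (⟨N-1, _⟩ : Fin N) else if h : (k : ℕ) < (x : ℕ) then (⟨(x:ℕ)-1, _⟩ : Fin N) else x : Fin N) : ℕ) = _
  split_ifs <;> rfl

lemma sign_rho {N : ℕ} : ∀ (d : ℕ) (k : Fin N), (k : ℕ) + d = N - 1 →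
    Equiv.Perm.sign (rho k) = (-1) ^ d := by
  intro d
  induction d with
  | zero =>
    intro k hk
    have : rho k = 1 := by
      apply Equiv.ext; intro x
      apply Fin.ext
      rw [rho_apply]
      have := x.isLt; have := k.isLt
      split_ifs <;> simp <;> omega
    rw [this]; simp
  | succ d ih =>
    intro k hk
    have hk1 : (k : ℕ) + 1 < N := by have := k.isLt; omega
    have hstep : rho k = Equiv.swap k ⟨(k:ℕ)+1, hk1⟩ * rho ⟨(k:ℕ)+1, hk1⟩ := by
      apply Equiv.ext; intro x
      apply Fin.ext
      rw [Equiv.Perm.mul_apply]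
      have hx := x.isLt; have hkN := k.isLt
      rw [rho_apply]
      rcases Nat.lt_trichotomy ((rho ⟨(k:ℕ)+1, hk1⟩ x : Fin N) : ℕ) ((k:ℕ)) with h | h | h
      · rw [Equiv.swap_apply_of_ne_of_ne]
        · rw [rho_apply] at h ⊢
          split_ifs at h ⊢ <;> simp_all <;> omega
        · intro hc; rw [hc] at h; simp at h
        · intro hc; rw [hc] at h; simp at h; try omega
      · have : rho ⟨(k:ℕ)+1, hk1⟩ x = k := Fin.ext h
        rw [this, Equiv.swap_apply_left]
        rw [rho_apply] at h
        split_ifs at h <;> simp_all <;> omega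
      · rcases Nat.lt_or_ge ((k:ℕ)+1) ((rho ⟨(k:ℕ)+1, hk1⟩ x : Fin N) : ℕ) with h2 | h2
        · rw [Equiv.swap_apply_of_ne_of_ne]
          · rw [rho_apply] at h2 ⊢
            split_ifs at h2 ⊢ <;> simp_all <;> omega
          · intro hc; rw [hc] at h; simp at h; try omega
          · intro hc; rw [hc] at h2; simp at h2; try omega
        · have h3 : ((rho ⟨(k:ℕ)+1, hk1⟩ x : Fin N) : ℕ) = (k:ℕ)+1 := by omega
          have : rho ⟨(k:ℕ)+1, hk1⟩ x = ⟨(k:ℕ)+1, hk1⟩ := Fin.ext h3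
          rw [this, Equiv.swap_apply_right]
          rw [rho_apply] at h3
          split_ifs at h3 <;> simp_all <;> omega
    rw [hstep, map_mul, Equiv.Perm.sign_swap (by intro hc; simp [Fin.ext_iff] at hc),
      ih ⟨(k:ℕ)+1, hk1⟩ (by simp; omega)]
    rw [pow_succ]
    exact mul_comm _ _

/-- Extend a permutation of `Fin N` to `Fin (N+1)` fixing the last element. -/
def extLast {N : ℕ} (ψ : Equiv.Perm (Fin N)) : Equiv.Perm (Fin (N + 1)) where
  toFun x := if h : (x : ℕ) < N then ⟨(ψ ⟨x, h⟩ : ℕ), by have := (ψ ⟨(x:ℕ), h⟩).isLt; omega⟩ else x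
  invFun x := if h : (x : ℕ) < N then ⟨(ψ⁻¹ ⟨x, h⟩ : ℕ), by have := (ψ⁻¹ ⟨(x:ℕ), h⟩).isLt; omega⟩ else x
  left_inv := by
    intro x
    by_cases h : (x : ℕ) < N
    · simp only [dif_pos h]
      have h2 : ((ψ ⟨(x:ℕ), h⟩ : Fin N) : ℕ) < N := (ψ ⟨(x:ℕ), h⟩).isLt
      simp only [dif_pos h2]
      apply Fin.ext
      simp
    · simp only [dif_neg h]
  right_inv := by
    intro x
    by_cases h : (x : ℕ) < N
    · simp only [dif_pos h]
      have h2 : ((ψ⁻¹ ⟨(x:ℕ), h⟩ : Fin N) : ℕ) < N := (ψ⁻¹ ⟨(x:ℕ), h⟩).isLt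
      simp only [dif_pos h2]
      apply Fin.ext
      simp
    · simp only [dif_neg h]

lemma extLast_apply {N : ℕ} (ψ : Equiv.Perm (Fin N)) (x : Fin (N + 1)) (h : (x : ℕ) < N) :
    ((extLast ψ x : Fin (N + 1)) : ℕ) = (ψ ⟨(x : ℕ), h⟩ : ℕ) := by
  simp only [extLast, Equiv.coe_fn_mk]
  rw [dif_pos h]

lemma extLast_apply_last {N : ℕ} (ψ : Equiv.Perm (Fin N)) (x : Fin (N + 1)) (h : ¬ (x : ℕ) < N) :
    extLast ψ x = x := by
  simp only [extLast, Equiv.coe_fn_mk]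
  rw [dif_neg h]

lemma extLast_mul {N : ℕ} (σ τ : Equiv.Perm (Fin N)) :
    extLast (σ * τ) = extLast σ * extLast τ := by
  apply Equiv.ext; intro x
  apply Fin.ext
  rw [Equiv.Perm.mul_apply]
  by_cases h : (x : ℕ) < N
  · rw [extLast_apply _ _ h]
    have h2 : ((extLast τ x : Fin (N+1)) : ℕ) < N := by
      rw [extLast_apply _ _ h]; exact (τ ⟨(x:ℕ), h⟩).isLt
    rw [extLast_apply _ _ h2, Equiv.Perm.mul_apply]
    congr 1
    apply Fin.ext
    simp [extLast_apply _ _ h]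
  · rw [extLast_apply_last _ _ h, extLast_apply_last _ _ h, extLast_apply_last _ _ h]

lemma extLast_swap {N : ℕ} (a b : Fin N) :
    extLast (Equiv.swap a b) = Equiv.swap (a.castSucc) (b.castSucc) := by
  apply Equiv.ext; intro x
  apply Fin.ext
  by_cases h : (x : ℕ) < N
  · rw [extLast_apply _ _ h]
    simp only [Equiv.swap_apply_def, Fin.ext_iff, Fin.coe_castSucc]
    split_ifs <;> simp_all [Fin.ext_iff] <;> omega
  · rw [extLast_apply_last _ _ h]
    rw [Equiv.swap_apply_of_ne_of_ne]
    · intro hc; rw [hc] at h; exact h (by simp [Fin.castSucc_lt_last a, Fin.isLt])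
    · intro hc; rw [hc] at h; exact h (by simp [Fin.isLt])

lemma extLast_one {N : ℕ} : extLast (1 : Equiv.Perm (Fin N)) = 1 := by
  apply Equiv.ext; intro x
  by_cases h : (x : ℕ) < N
  · apply Fin.ext; rw [extLast_apply _ _ h]; simp
  · rw [extLast_apply_last _ _ h]; rfl

lemma sign_extLast {N : ℕ} (ψ : Equiv.Perm (Fin N)) :
    Equiv.Perm.sign (extLast ψ) = Equiv.Perm.sign ψ := by
  refine Equiv.Perm.swap_induction_on (motive := fun f => Equiv.Perm.sign (extLast f) = Equiv.Perm.sign f)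
    ψ ?_ ?_
  · show Equiv.Perm.sign (extLast (1 : Equiv.Perm (Fin N))) = _
    rw [extLast_one]; simp
  · intro f x y hxy ih
    rw [extLast_mul, map_mul, map_mul, ih, extLast_swap,
      Equiv.Perm.sign_swap hxy, Equiv.Perm.sign_swap (by simpa [Fin.ext_iff] using hxy)]

/-- Restrict a permutation of `Fin (N+1)` fixing the last element to `Fin N`. -/
def restrictLast {N : ℕ} (χ : Equiv.Perm (Fin (N + 1)))
    (hfix : χ (Fin.last N) = Fin.last N) : Equiv.Perm (Fin N) where
  toFun x := ⟨(χ x.castSucc : ℕ), by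
    have h1 : χ x.castSucc ≠ Fin.last N := by
      intro hc
      exact absurd (χ.injective (hc.trans hfix.symm)) (Fin.castSucc_lt_last x).ne
    have h2 := (χ x.castSucc).isLt
    have h3 : ((χ x.castSucc : Fin (N+1)) : ℕ) ≠ N := fun hc => h1 (Fin.ext (by simp [hc, Fin.last]))
    omega⟩
  invFun x := ⟨(χ⁻¹ x.castSucc : ℕ), by
    have hfix' : χ⁻¹ (Fin.last N) = Fin.last N := by
      rw [Equiv.Perm.inv_eq_iff_eq]; exact hfix.symm
    have h1 : χ⁻¹ x.castSucc ≠ Fin.last N := by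
      intro hc
      exact absurd (χ⁻¹.injective (hc.trans hfix'.symm)) (Fin.castSucc_lt_last x).ne
    have h2 := (χ⁻¹ x.castSucc).isLt
    have h3 : ((χ⁻¹ x.castSucc : Fin (N+1)) : ℕ) ≠ N := fun hc => h1 (Fin.ext (by rw [Fin.val_last]; exact hc))
    omega⟩
  left_inv := by
    intro x
    apply Fin.ext
    simp only [Fin.val_mk]
    have h : ∀ (p : ((χ x.castSucc : Fin (N+1)) : ℕ) < N),
        (⟨((χ x.castSucc : Fin (N+1)) : ℕ), p⟩ : Fin N).castSucc = χ x.castSucc :=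
      fun p => Fin.ext (by simp)
    rw [h, Equiv.Perm.inv_def, Equiv.symm_apply_apply, Fin.coe_castSucc]
  right_inv := by
    intro x
    apply Fin.ext
    simp only [Fin.val_mk]
    have h : ∀ (p : ((χ⁻¹ x.castSucc : Fin (N+1)) : ℕ) < N),
        (⟨((χ⁻¹ x.castSucc : Fin (N+1)) : ℕ), p⟩ : Fin N).castSucc = χ⁻¹ x.castSucc :=
      fun p => Fin.ext (by simp)
    rw [h, Equiv.Perm.inv_def, Equiv.apply_symm_apply, Fin.coe_castSucc]
lemma restrictLast_apply {N : ℕ} (χ : Equiv.Perm (Fin (N + 1)))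
    (hfix : χ (Fin.last N) = Fin.last N) (x : Fin N) :
    ((restrictLast χ hfix x : Fin N) : ℕ) = ((χ x.castSucc : Fin (N+1)) : ℕ) := rfl

lemma extLast_restrictLast {N : ℕ} (χ : Equiv.Perm (Fin (N + 1)))
    (hfix : χ (Fin.last N) = Fin.last N) :
    extLast (restrictLast χ hfix) = χ := by
  apply Equiv.ext; intro x
  apply Fin.ext
  by_cases h : (x : ℕ) < N
  · rw [extLast_apply _ _ h, restrictLast_apply]
    have he : (⟨(x:ℕ), h⟩ : Fin N).castSucc = x := Fin.ext (by simp)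
    rw [he]
  · rw [extLast_apply_last _ _ h]
    have hx : x = Fin.last N := Fin.ext (by have := x.isLt; simp [Fin.last]; omega)
    rw [hx, hfix]

def Ffun (m : ℕ) (φ : Equiv.Perm (Fin m)) (t : ℕ) : ℕ :=
  if h : t < m then (φ ⟨t, h⟩ : ℕ) else t

lemma Ffun_lt {m : ℕ} (φ : Equiv.Perm (Fin m)) {t : ℕ} (h : t < m) :
    Ffun m φ t < m := by
  simp only [Ffun, dif_pos h]; exact (φ ⟨t, h⟩).isLt

lemma Ffun_inj {m : ℕ} (φ : Equiv.Perm (Fin m)) {s t : ℕ} (hs : s < m) (ht : t < m)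
    (h : Ffun m φ s = Ffun m φ t) : s = t := by
  simp only [Ffun, dif_pos hs, dif_pos ht] at h
  have := φ.injective (Fin.ext h : φ ⟨s, hs⟩ = φ ⟨t, ht⟩)
  exact Fin.mk.inj_iff.mp this

lemma Ffun_ne {m : ℕ} (φ : Equiv.Perm (Fin m)) {s t : ℕ} (hs : s < m) (ht : t < m)
    (h : s ≠ t) : Ffun m φ s ≠ Ffun m φ t := fun hc => h (Ffun_inj φ hs ht hc)

lemma Ffun_fin {m : ℕ} (φ : Equiv.Perm (Fin m)) (t : Fin m) :
    Ffun m φ (t : ℕ) = (φ t : ℕ) := by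
  simp [Ffun, t.isLt]

/-- The block permutation as a function on `ℕ`. -/
def gfun (m n : ℕ) (i : Fin m) (φ : Equiv.Perm (Fin m)) (x : ℕ) : ℕ :=
  if x < (i : ℕ) then
    Ffun m φ x + (if Ffun m φ i < Ffun m φ x then n - 1 else 0)
  else if x < (i : ℕ) + n then
    Ffun m φ i + (x - i)
  else
    Ffun m φ (x - (n - 1)) + (if Ffun m φ i < Ffun m φ (x - (n - 1)) then n - 1 else 0)

/-- Key recursion: the size-`(k+2)` block function is obtained from the size-`(k+1)` one
by inserting a point at source position `i+k+1` going to target position `φ i + k + 1`. -/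
lemma gfun_step {m k : ℕ} (i : Fin m) (φ : Equiv.Perm (Fin m)) (x : ℕ) (hx : x < m + k) :
    (if gfun m (k+2) i φ (if (i:ℕ)+(k+1) ≤ x then x+1 else x) = Ffun m φ (i:ℕ) + (k+1) then m + k
     else if Ffun m φ (i:ℕ) + (k+1) < gfun m (k+2) i φ (if (i:ℕ)+(k+1) ≤ x then x+1 else x) then
       gfun m (k+2) i φ (if (i:ℕ)+(k+1) ≤ x then x+1 else x) - 1
     else gfun m (k+2) i φ (if (i:ℕ)+(k+1) ≤ x then x+1 else x))
    = gfun m (k+1) i φ x := by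
  have hi := i.isLt
  have hFi : Ffun m φ (i:ℕ) < m := Ffun_lt φ hi
  by_cases hxa : x < (i:ℕ)
  · have hx' : ¬ ((i:ℕ)+(k+1) ≤ x) := by omega
    rw [if_neg hx']
    have hFx : Ffun m φ x < m := Ffun_lt φ (by omega)
    have hne : Ffun m φ x ≠ Ffun m φ (i:ℕ) := Ffun_ne φ (by omega) hi (by omega)
    unfold gfun
    rw [if_pos hxa, if_pos hxa]
    split_ifs <;> omega
  · by_cases hxb : x < (i:ℕ) + (k+1)
    · have hx' : ¬ ((i:ℕ)+(k+1) ≤ x) := by omega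
      rw [if_neg hx']
      unfold gfun
      rw [if_neg hxa, if_neg hxa, if_pos (show x < (i:ℕ) + (k+2) by omega),
        if_pos (show x < (i:ℕ) + (k+1) by omega)]
      split_ifs <;> omega
    · have hx' : (i:ℕ)+(k+1) ≤ x := by omega
      rw [if_pos hx']
      have ht : x - k < m := by omega
      have hti : (i:ℕ) < x - k := by omega
      have hFt : Ffun m φ (x - k) < m := Ffun_lt φ ht
      have hne : Ffun m φ (x - k) ≠ Ffun m φ (i:ℕ) := Ffun_ne φ ht hi (by omega)
      unfold gfun
      rw [if_neg (show ¬ (x + 1 < (i:ℕ)) by omega), if_neg (show ¬ (x < (i:ℕ)) by omega),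
        if_neg (show ¬ (x + 1 < (i:ℕ) + (k+2)) by omega),
        if_neg (show ¬ (x < (i:ℕ) + (k+1)) by omega)]
      have he1 : x + 1 - (k + 2 - 1) = x - k := by omega
      have he2 : x - (k + 1 - 1) = x - k := by omega
      rw [he1, he2]
      split_ifs <;> omega

/-- `IsBlockPerm m n i φ σ ψ` says that `ψ ∈ S_{m+n-1}` is the block permutation
`ϑ_{m;1,…,1,n,1,…,1}(φ, 1,…,1,σ,1,…,1)` obtained from `φ ∈ S_m` by replacing the
`i`-th input with a block of size `n` carrying the internal permutation
`σ ∈ S_n`:  positions are `0`-based; the `m` blocks have sizes `1,…,1,n,1,…,1`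
(size `n` at position `i`); block `t` starts at source position
`t + (n-1)·[i < t]` (resp. `t` for `t ≤ i`), is sent to the block slot `φ t`,
which starts at target position `φ t + (n-1)·[φ i < φ t]`, and within the big
block positions are permuted by `σ`. -/
def IsBlockPerm (m n : ℕ) (hn : 1 ≤ n) (i : Fin m) (φ : Equiv.Perm (Fin m))
    (σ : Equiv.Perm (Fin n)) (ψ : Equiv.Perm (Fin (m + n - 1))) : Prop :=
  (∀ t : Fin m, t ≠ i →
    (ψ ⟨(t : ℕ) + (if (i : ℕ) < (t : ℕ) then n - 1 else 0),
        by have := t.isLt; have := i.isLt; split <;> omega⟩ : ℕ)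
      = (φ t : ℕ) + (if (φ i : ℕ) < (φ t : ℕ) then n - 1 else 0)) ∧
  (∀ o : Fin n,
    (ψ ⟨(i : ℕ) + (o : ℕ), by have := o.isLt; have := i.isLt; omega⟩ : ℕ)
      = (φ i : ℕ) + (σ o : ℕ))

lemma isBlockPerm_apply {m n : ℕ} (hn : 1 ≤ n) (i : Fin m) (φ : Equiv.Perm (Fin m))
    (ψ : Equiv.Perm (Fin (m + n - 1))) (hψ : IsBlockPerm m n hn i φ 1 ψ)
    (x : Fin (m + n - 1)) : (ψ x : ℕ) = gfun m n i φ (x : ℕ) := by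
  obtain ⟨h1, h2⟩ := hψ
  have hx := x.isLt
  have hi := i.isLt
  by_cases c1 : (x : ℕ) < (i : ℕ)
  · have ht : (x : ℕ) < m := by omega
    have key := h1 ⟨(x : ℕ), ht⟩ (by intro hc; rw [Fin.ext_iff] at hc; simp at hc; omega)
    have harg : (⟨((⟨(x:ℕ), ht⟩ : Fin m) : ℕ) + (if (i : ℕ) < ((⟨(x:ℕ), ht⟩ : Fin m) : ℕ) then n - 1 else 0),
        by have := i.isLt; split <;> omega⟩ : Fin (m + n - 1)) = x := Fin.ext (by simp; omega)
    rw [harg] at key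
    rw [key]
    unfold gfun
    rw [if_pos c1]
    rw [show Ffun m φ (x : ℕ) = Ffun m φ ((⟨(x:ℕ), ht⟩ : Fin m) : ℕ) from rfl, Ffun_fin, Ffun_fin]
  · by_cases c2 : (x : ℕ) < (i : ℕ) + n
    · have ho : (x : ℕ) - (i : ℕ) < n := by omega
      have key := h2 ⟨(x : ℕ) - (i : ℕ), ho⟩
      have harg : (⟨(i : ℕ) + ((⟨(x:ℕ) - (i:ℕ), ho⟩ : Fin n) : ℕ),
          by have := i.isLt; simp; omega⟩ : Fin (m + n - 1)) = x := Fin.ext (by simp; omega)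
      rw [harg] at key
      rw [key]
      unfold gfun
      rw [if_neg c1, if_pos c2, Ffun_fin]
      simp
    · have ht : (x : ℕ) - (n - 1) < m := by omega
      have hti : (i : ℕ) < (x : ℕ) - (n - 1) := by omega
      have key := h1 ⟨(x : ℕ) - (n - 1), ht⟩ (by intro hc; rw [Fin.ext_iff] at hc; simp at hc; omega)
      have harg : (⟨((⟨(x:ℕ) - (n-1), ht⟩ : Fin m) : ℕ) + (if (i : ℕ) < ((⟨(x:ℕ) - (n-1), ht⟩ : Fin m) : ℕ) then n - 1 else 0),
          by have := i.isLt; split <;> omega⟩ : Fin (m + n - 1)) = x := Fin.ext (by simp [hti]; omega)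
      rw [harg] at key
      rw [key]
      unfold gfun
      rw [if_neg c1, if_neg c2]
      rw [show Ffun m φ ((x:ℕ) - (n-1)) = Ffun m φ ((⟨(x:ℕ) - (n-1), ht⟩ : Fin m) : ℕ) from rfl, Ffun_fin, Ffun_fin]

lemma neg_one_zpow_eq {z w : ℤ} (t : ℤ) (ht : z - w = 2 * t) : (-1 : ℤˣ) ^ z = (-1 : ℤˣ) ^ w := by
  have hz : z = w + 2 * t := by omega
  rw [hz, zpow_add, show (2:ℤ) * t = t + t from by ring, zpow_add, Int.units_mul_self, mul_one]

lemma main_lemma (k : ℕ) : ∀ (m : ℕ) (i : Fin m) (φ : Equiv.Perm (Fin m))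
    (ψ : Equiv.Perm (Fin (m + k))),
    (∀ x : Fin (m + k), (ψ x : ℕ) = gfun m (k + 1) i φ (x : ℕ)) →
    Equiv.Perm.sign ψ
      = (-1 : ℤˣ) ^ ((k : ℤ) * (((φ i : ℕ) : ℤ) - ((i : ℕ) : ℤ))) * Equiv.Perm.sign φ := by
  induction k with
  | zero =>
    intro m i φ ψ H
    have hψφ : ψ = φ := by
      apply Equiv.ext; intro x
      apply Fin.ext
      rw [H x]
      have hx : (x : ℕ) < m := by have := x.isLt; omega
      have hi := i.isLt
      unfold gfun
      by_cases c1 : (x : ℕ) < (i : ℕ)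
      · rw [if_pos c1]
        have h0 : (if Ffun m φ (i:ℕ) < Ffun m φ (x:ℕ) then 1 - 1 else 0) = 0 := by
          split_ifs <;> rfl
        rw [h0, show Ffun m φ ((x:ℕ)) = Ffun m φ ((⟨(x:ℕ), hx⟩ : Fin m) : ℕ) from rfl, Ffun_fin]
        have he : (⟨(x:ℕ), hx⟩ : Fin m) = x := Fin.ext rfl
        rw [he]
        omega
      · by_cases c2 : (x : ℕ) < (i : ℕ) + 1
        · rw [if_neg c1, if_pos c2]
          have hxi : (x : ℕ) = (i : ℕ) := by omega
          have hxi' : (⟨(x:ℕ), hx⟩ : Fin m) = i := Fin.ext hxi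
          rw [Ffun_fin]
          have he : x = (⟨(x:ℕ), hx⟩ : Fin m) := Fin.ext rfl
          rw [he, hxi']
          omega
        · rw [if_neg c1, if_neg c2]
          have h0 : (if Ffun m φ (i:ℕ) < Ffun m φ ((x:ℕ) - (1-1)) then 1 - 1 else 0) = 0 := by
            split_ifs <;> rfl
          rw [h0, show (x:ℕ) - (1-1) = ((⟨(x:ℕ), hx⟩ : Fin m) : ℕ) from by simp, Ffun_fin]
          have he : (⟨(x:ℕ), hx⟩ : Fin m) = x := Fin.ext rfl
          rw [he]
          omega
    have hcast : Equiv.Perm.sign ψ = Equiv.Perm.sign φ := by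
      have h1 : @Equiv.Perm.sign (Fin (m+0)) _ _ ψ = @Equiv.Perm.sign (Fin (m+0)) _ _ φ :=
        congrArg _ hψφ
      exact h1.trans rfl
    rw [hcast]
    norm_num
  | succ k ih =>
    intro m i φ ψ' H'
    let ψ₂ : Equiv.Perm (Fin (m + k + 1)) := ψ'
    have hi := i.isLt
    have hFi : Ffun m φ (i : ℕ) < m := Ffun_lt φ hi
    have hc : Ffun m φ (i : ℕ) + (k + 1) < m + k + 1 := by omega
    have hd : (i : ℕ) + (k + 1) < m + k + 1 := by omega
    set c : Fin (m + k + 1) := ⟨Ffun m φ (i : ℕ) + (k + 1), hc⟩ with hcdef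
    set d : Fin (m + k + 1) := ⟨(i : ℕ) + (k + 1), hd⟩ with hddef
    have hψ'' : ∀ y : Fin (m + k + 1), ((ψ₂ y : Fin (m + k + 1)) : ℕ) = gfun m (k + 2) i φ (y : ℕ) :=
      fun y => H' y
    set χ : Equiv.Perm (Fin (m + k + 1)) := (rho c)⁻¹ * ψ₂ * rho d with hχ
    have hχ_apply : ∀ y : Fin (m + k + 1), χ y = (rho c)⁻¹ (ψ₂ (rho d y)) := by
      intro y; rfl
    have hrhod_last : rho d (Fin.last (m + k)) = d := by
      apply Fin.ext
      rw [rho_apply]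
      simp [Fin.last]
    have hψ'd : ((ψ₂ d : Fin (m + k + 1)) : ℕ) = (c : ℕ) := by
      rw [hψ'' d]
      show gfun m (k + 2) i φ ((i:ℕ) + (k+1)) = Ffun m φ (i:ℕ) + (k + 1)
      unfold gfun
      rw [if_neg (by omega), if_pos (by omega)]
      omega
    have hfix : χ (Fin.last (m + k)) = Fin.last (m + k) := by
      rw [hχ_apply, hrhod_last]
      have hψ'd' : ψ₂ d = c := Fin.ext hψ'd
      rw [hψ'd']
      apply Fin.ext
      rw [rho_symm_apply]
      simp [Fin.last]
    set ψ : Equiv.Perm (Fin (m + k)) := restrictLast χ hfix with hψdef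
    have hH : ∀ x : Fin (m + k), (ψ x : ℕ) = gfun m (k + 1) i φ (x : ℕ) := by
      intro x
      rw [restrictLast_apply, hχ_apply]
      have e1 : ((rho d x.castSucc : Fin (m + k + 1)) : ℕ)
          = if (i:ℕ) + (k+1) ≤ (x:ℕ) then (x:ℕ) + 1 else (x:ℕ) := by
        rw [rho_apply]
        have hxlt := x.isLt
        rw [if_neg (by simp; omega)]
        simp [hddef, Fin.coe_castSucc]
      have e2 : ((ψ₂ (rho d x.castSucc) : Fin (m + k + 1)) : ℕ)
          = gfun m (k + 2) i φ (if (i:ℕ) + (k+1) ≤ (x:ℕ) then (x:ℕ) + 1 else (x:ℕ)) := by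
        rw [hψ'' (rho d x.castSucc), e1]
      rw [rho_symm_apply, e2]
      exact gfun_step i φ (x : ℕ) x.isLt
    have hsψ := ih m i φ ψ hH
    have heq : ψ₂ = rho c * extLast ψ * (rho d)⁻¹ := by
      have h2 : extLast ψ = χ := extLast_restrictLast χ hfix
      rw [h2, hχ]
      group
    have hsign : Equiv.Perm.sign ψ₂ =
        Equiv.Perm.sign (rho c) * Equiv.Perm.sign (extLast ψ) * Equiv.Perm.sign (rho d) := by
      rw [heq, map_mul, map_mul, Equiv.Perm.sign_inv]
    have hcast : Equiv.Perm.sign ψ' = Equiv.Perm.sign ψ₂ := rfl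
    rw [hcast, hsign, sign_extLast, hsψ,
      sign_rho (m - 1 - Ffun m φ (i:ℕ)) c (by simp [hcdef]; omega),
      sign_rho (m - 1 - (i:ℕ)) d (by simp [hddef]; omega)]
    have hFeq : Ffun m φ (i : ℕ) = ((φ i : Fin m) : ℕ) := Ffun_fin φ i
    rw [hFeq] at hFi ⊢
    have collect : (-1 : ℤˣ) ^ (m - 1 - ((φ i : Fin m) : ℕ))
          * ((-1 : ℤˣ) ^ ((k : ℤ) * (((φ i : ℕ) : ℤ) - ((i : ℕ) : ℤ))) * Equiv.Perm.sign φ)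
          * (-1 : ℤˣ) ^ (m - 1 - (i : ℕ))
        = (-1 : ℤˣ) ^ (((m - 1 - ((φ i : Fin m) : ℕ) : ℕ) : ℤ)
            + (k : ℤ) * (((φ i : ℕ) : ℤ) - ((i : ℕ) : ℤ)) + ((m - 1 - (i : ℕ) : ℕ) : ℤ))
          * Equiv.Perm.sign φ := by
      rw [zpow_add, zpow_add, zpow_natCast, zpow_natCast, ← mul_assoc, mul_right_comm]
    rw [collect]
    congr 1
    apply neg_one_zpow_eq ((m : ℤ) - 1 - (((φ i : Fin m) : ℕ) : ℤ))
    have hred : (((k + 1 : ℕ)) : ℤ) * (((φ i : ℕ) : ℤ) - ((i : ℕ) : ℤ))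
        = (k : ℤ) * (((φ i : ℕ) : ℤ) - ((i : ℕ) : ℤ)) + (((φ i : ℕ) : ℤ) - ((i : ℕ) : ℤ)) := by
      push_cast
      ring
    rw [hred]
    ring_nf
    omega

/-- The sign of the block permutation `φ''` obtained from `φ ∈ S_m` by replacing
the `i`-th input with a block of size `n` (identity inside the block):
`sgn(φ'') = (-1)^{(n-1)(φ(i)-i)}·sgn(φ)`. -/
theorem stmt19 {m n : ℕ} (hn : 1 ≤ n) (i : Fin m) (φ : Equiv.Perm (Fin m))
    (ψ : Equiv.Perm (Fin (m + n - 1))) (hψ : IsBlockPerm m n hn i φ 1 ψ) :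
    Equiv.Perm.sign ψ
      = (-1 : ℤˣ) ^ (((n : ℤ) - 1) * (((φ i : ℕ) : ℤ) - ((i : ℕ) : ℤ)))
        * Equiv.Perm.sign φ := by
  obtain ⟨k, rfl⟩ : ∃ k, n = k + 1 := ⟨n - 1, by omega⟩
  have H : ∀ x : Fin (m + k), ((ψ x : Fin (m + k)) : ℕ) = gfun m (k + 1) i φ (x : ℕ) :=
    fun x => isBlockPerm_apply hn i φ ψ hψ x
  have hs := main_lemma k m i φ ψ H
  have hcast : Equiv.Perm.sign ψ = @Equiv.Perm.sign (Fin (m + k)) _ _ ψ := rfl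
  rw [hcast, hs]
  congr 2
  push_cast
  ring
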